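/- arXiv:2205.05098 — 6 statements merged into one kernel-verified Lean document; each statement's English description precedes it below -/
import Mathlib

section
/- Let G = (V, E) be a finite simple graph with independence number α(G) < |V| and xi number Ξ(G). Then for every subset S ⊆ V of vertices, |S| − e(S)/Ξ(G) ≤ α(G), where e(S) denotes the number of edges of G having both endpoints in S. -/
open scoped Classical

/-- The independence number of a finite simple graph: the largest cardinality of a
set of pairwise nonadjacent vertices. -/
noncomputable def indepNum {V : Type*} [Fintype V] (G : SimpleGraph V) : ℕ :=
  sSup {n | ∃ s : Finset V, (∀ u ∈ s, ∀ v ∈ s, u ≠ v → ¬ G.Adj u v) ∧ s.card = n}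

/-- `xiOf G S = max_{v ∈ S} |{u ∈ S : u adjacent to v}|`. -/
noncomputable def xiOf {V : Type*} [Fintype V] (G : SimpleGraph V) (S : Finset V) : ℕ :=
  S.sup fun v => (S.filter fun u => G.Adj u v).card

/-- The xi number of a graph: the minimum of `xiOf G S` over all vertex subsets `S`
with `|S| = α(G) + 1`. -/
noncomputable def xiNum {V : Type*} [Fintype V] (G : SimpleGraph V) : ℕ :=
  sInf {k | ∃ S : Finset V, S.card = indepNum G + 1 ∧ xiOf G S = k}

lemma indep_card_le {V : Type*} [Fintype V] (G : SimpleGraph V) (s : Finset V)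
    (hs : ∀ u ∈ s, ∀ v ∈ s, u ≠ v → ¬ G.Adj u v) : s.card ≤ indepNum G :=
  le_csSup ⟨Fintype.card V, fun n ⟨t, _, ht⟩ => ht ▸ t.card_le_univ⟩ ⟨s, hs, rfl⟩

lemma xiNum_pos {V : Type*} [Fintype V] (G : SimpleGraph V)
    (hα : indepNum G < Fintype.card V) : 1 ≤ xiNum G := by
  have hall : ∀ k ∈ {k | ∃ S : Finset V, S.card = indepNum G + 1 ∧ xiOf G S = k}, 1 ≤ k := by
    rintro k ⟨S, hScard, rfl⟩
    rcases Nat.eq_zero_or_pos (xiOf G S) with h0 | h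
    swap
    · exact h
    exfalso
    have hind : ∀ u ∈ S, ∀ v ∈ S, u ≠ v → ¬ G.Adj u v := by
      intro u hu v hv huv hadj
      have h1 : (S.filter fun u => G.Adj u v).card ≤ xiOf G S := by
        exact Finset.le_sup (f := fun v => (S.filter fun u => G.Adj u v).card) hv
      rw [h0] at h1
      have hm : u ∈ S.filter fun u => G.Adj u v := Finset.mem_filter.mpr ⟨hu, hadj⟩
      have := Finset.card_pos.mpr ⟨u, hm⟩
      omega
    have := indep_card_le G S hind
    omega
  have hne : {k | ∃ S : Finset V, S.card = indepNum G + 1 ∧ xiOf G S = k}.Nonempty := by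
    obtain ⟨T, _, hT⟩ := Finset.exists_subset_card_eq (s := (Finset.univ : Finset V))
      (n := indepNum G + 1) (by simpa using hα)
    exact ⟨xiOf G T, T, hT, rfl⟩
  exact hall _ (Nat.sInf_mem hne)

lemma edges_count {V : Type*} [Fintype V] (G : SimpleGraph V) (S : Finset V) (v : V)
    (hv : v ∈ S) :
    (G.edgeFinset.filter fun e => ∀ x ∈ e, x ∈ S.erase v).card
      + (S.filter fun u => G.Adj u v).card
      ≤ (G.edgeFinset.filter fun e => ∀ x ∈ e, x ∈ S).card := by
  set A := G.edgeFinset.filter fun e => ∀ x ∈ e, x ∈ S with hA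
  have hsplit : (A.filter fun e => ¬ v ∈ e).card + (A.filter fun e => v ∈ e).card
      = A.card := by
    rw [Finset.filter_not]
    exact Finset.card_sdiff_add_card_eq_card (Finset.filter_subset _ _)
  have h1 : (G.edgeFinset.filter fun e => ∀ x ∈ e, x ∈ S.erase v)
      ⊆ A.filter fun e => ¬ v ∈ e := by
    intro e he
    rw [Finset.mem_filter] at he ⊢
    refine ⟨Finset.mem_filter.mpr ⟨he.1, fun x hx => Finset.mem_of_mem_erase (he.2 x hx)⟩, ?_⟩
    intro hve
    exact Finset.ne_of_mem_erase (he.2 v hve) rfl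
  have h2 : (S.filter fun u => G.Adj u v).card ≤ (A.filter fun e => v ∈ e).card := by
    apply Finset.card_le_card_of_injOn (fun u => s(u, v))
    · intro u hu
      rw [Finset.mem_coe, Finset.mem_filter] at hu
      rw [Finset.mem_coe, Finset.mem_filter, hA, Finset.mem_filter]
      refine ⟨⟨SimpleGraph.mem_edgeFinset.mpr hu.2, ?_⟩, Sym2.mem_mk_right u v⟩
      intro x hx
      rcases Sym2.mem_iff.mp hx with rfl | rfl
      · exact hu.1
      · exact hv
    · intro a _ b _ hab
      rcases Sym2.eq_iff.mp hab with ⟨h, _⟩ | ⟨h1, h2⟩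
      · exact h
      · rw [h1, ← h2]
  calc (G.edgeFinset.filter fun e => ∀ x ∈ e, x ∈ S.erase v).card
        + (S.filter fun u => G.Adj u v).card
      ≤ (A.filter fun e => ¬ v ∈ e).card + (A.filter fun e => v ∈ e).card :=
        Nat.add_le_add (Finset.card_le_card h1) h2
    _ = A.card := hsplit

/-- for every subset `S` of vertices,
`|S| − e(S)/Ξ(G) ≤ α(G)`, where `e(S)` is the number of edges of `G` with both
endpoints in `S`. -/
theorem stmt_0 {V : Type*} [Fintype V] (G : SimpleGraph V)
    (hα : indepNum G < Fintype.card V) (S : Finset V) :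
    (S.card : ℝ) -
      (G.edgeFinset.filter fun e => ∀ x ∈ e, x ∈ S).card / (xiNum G : ℝ)
      ≤ indepNum G := by
  have hxi1 : 1 ≤ xiNum G := xiNum_pos G hα
  have hxiR : (1 : ℝ) ≤ (xiNum G : ℝ) := by exact_mod_cast hxi1
  have hxipos : (0 : ℝ) < (xiNum G : ℝ) := by linarith
  have key : ∀ n : ℕ, ∀ S : Finset V, S.card ≤ n →
      (S.card : ℝ) -
        (G.edgeFinset.filter fun e => ∀ x ∈ e, x ∈ S).card / (xiNum G : ℝ)
        ≤ indepNum G := by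
    intro n
    induction n with
    | zero =>
      intro S hS
      have h0 : S.card = 0 := Nat.le_zero.mp hS
      have hnn : (0 : ℝ) ≤ ((G.edgeFinset.filter fun e => ∀ x ∈ e, x ∈ S).card : ℝ)
          / (xiNum G : ℝ) := by positivity
      have : (0 : ℝ) ≤ (indepNum G : ℝ) := Nat.cast_nonneg _
      rw [h0]
      push_cast
      linarith
    | succ n ih =>
      intro S hS
      by_cases hle : S.card ≤ indepNum G
      · have hnn : (0 : ℝ) ≤ ((G.edgeFinset.filter fun e => ∀ x ∈ e, x ∈ S).card : ℝ)
            / (xiNum G : ℝ) := by positivity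
        have hc : (S.card : ℝ) ≤ (indepNum G : ℝ) := by exact_mod_cast hle
        linarith
      · push_neg at hle
        obtain ⟨T, hTS, hTcard⟩ := Finset.exists_subset_card_eq (s := S) (n := indepNum G + 1) hle
        have hTne : T.Nonempty := Finset.card_pos.mp (by omega)
        obtain ⟨v, hvT, hveq⟩ :=
          Finset.exists_mem_eq_sup T hTne (fun v => (T.filter fun u => G.Adj u v).card)
        have hvS : v ∈ S := hTS hvT
        have hxile : xiNum G ≤ (S.filter fun u => G.Adj u v).card := by
          calc xiNum G ≤ xiOf G T := Nat.sInf_le ⟨T, hTcard, rfl⟩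
            _ = (T.filter fun u => G.Adj u v).card := by rw [xiOf]; exact hveq
            _ ≤ (S.filter fun u => G.Adj u v).card :=
                Finset.card_le_card (Finset.filter_subset_filter _ hTS)
        have hedge := edges_count G S v hvS
        have hcard : (S.erase v).card + 1 = S.card := Finset.card_erase_add_one hvS
        have hih := ih (S.erase v) (by omega)
        set a : ℕ := (G.edgeFinset.filter fun e => ∀ x ∈ e, x ∈ S).card with ha
        set b : ℕ := (G.edgeFinset.filter fun e => ∀ x ∈ e, x ∈ S.erase v).card with hb
        have hba : (b : ℝ) + (xiNum G : ℝ) ≤ (a : ℝ) := by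
          have : b + xiNum G ≤ a := by omega
          exact_mod_cast this
        have hdiv : ((b : ℝ) + (xiNum G : ℝ)) / (xiNum G : ℝ) ≤ (a : ℝ) / (xiNum G : ℝ) := by
          gcongr
        have heq : ((b : ℝ) + (xiNum G : ℝ)) / (xiNum G : ℝ)
            = (b : ℝ) / (xiNum G : ℝ) + 1 := by
          field_simp
        have hcR : ((S.erase v).card : ℝ) + 1 = (S.card : ℝ) := by exact_mod_cast hcard
        linarith
  exact key S.card S le_rfl
end

section
/- (Theorem 2.) Let G = (V, E) be a finite simple graph with independence number α(G) < |V| and xi number Ξ(G). Let d ≥ 1 and let v : V → (Fin d → ℂ) be an orthonormal representation of G in ℂ^d, i.e., each v_i is a unit vector and ⟨v_i, v_j⟩ = 0 whenever i and j are adjacent. Let ψ : Fin d × Fin d → ℂ be given by ψ(k,l) = 1/√d if k = l and 0 otherwise, and for i, j ∈ V set P(i, j) = |⟨v_i ⊗ v̄_j, ψ⟩|², where v_i ⊗ v̄_j is the vector (k, l) ↦ v_i(k)·conj(v_j(l)). Then Σ_{i ∈ V} P(i, i) − (1/(2·Ξ(G))) · Σ_{{i,j} ∈ E} (P(i, j)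 + P(j, i)) = |V| / d. -/
open scoped Classical
open ComplexConjugate

/-- Theorem 2: for an orthonormal representation `v` of `G` in `ℂ^d`,
the quantum value of the graph Bell functional on the maximally entangled state is
`|V| / d`. -/
theorem stmt_3 {V : Type*} [Fintype V] (G : SimpleGraph V)
    (hα : indepNum G < Fintype.card V)
    (d : ℕ) (hd : 1 ≤ d) (v : V → Fin d → ℂ)
    (hunit : ∀ i, ∑ k, conj (v i k) * v i k = 1)
    (horth : ∀ i j, G.Adj i j → ∑ k, conj (v i k) * v j k = 0)
    (ψ : Fin d × Fin d → ℂ)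
    (hψ : ∀ p : Fin d × Fin d, ψ p = if p.1 = p.2 then ((1 / Real.sqrt d : ℝ) : ℂ) else 0)
    (P : V → V → ℝ)
    (hP : ∀ i j, P i j =
      ‖∑ p : Fin d × Fin d, conj (v i p.1 * conj (v j p.2)) * ψ p‖ ^ 2) :
    ∑ i, P i i -
      (1 / (2 * (xiNum G : ℝ))) *
        ∑ e ∈ G.edgeFinset, Sym2.lift ⟨fun i j => P i j + P j i, fun i j => by ring⟩ e
      = (Fintype.card V : ℝ) / d := by
  have hdpos : (0:ℝ) < d := by exact_mod_cast hd
  have key : ∀ i j, (∑ p : Fin d × Fin d, conj (v i p.1 * conj (v j p.2)) * ψ p)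
      = ((1 / Real.sqrt d : ℝ) : ℂ) * ∑ k, conj (v i k) * v j k := by
    intro i j
    rw [Fintype.sum_prod_type, Finset.mul_sum]
    refine Finset.sum_congr rfl fun k _ => ?_
    rw [Finset.sum_eq_single k]
    · simp [hψ]; ring
    · intro l _ hl
      simp [hψ, (Ne.symm hl)]
    · simp
  have hPdiag : ∀ i, P i i = 1 / d := by
    intro i
    rw [hP, key, hunit]
    rw [mul_one]
    rw [Complex.norm_real, Real.norm_eq_abs, abs_of_nonneg (by positivity : (0:ℝ) ≤ 1 / Real.sqrt d),
      div_pow, one_pow, Real.sq_sqrt hdpos.le]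
  have hPadj : ∀ i j, G.Adj i j → P i j = 0 := by
    intro i j h
    rw [hP, key, horth i j h, mul_zero]
    simp
  have hedge : ∑ e ∈ G.edgeFinset,
      Sym2.lift ⟨fun i j => P i j + P j i, fun i j => by ring⟩ e = 0 := by
    refine Finset.sum_eq_zero fun e he => ?_
    induction e using Sym2.ind with
    | _ i j =>
      have hadj : G.Adj i j := by
        rwa [SimpleGraph.mem_edgeFinset, SimpleGraph.mem_edgeSet] at he
      simp [hPadj i j hadj, hPadj j i hadj.symm]
  rw [hedge, mul_zero, sub_zero]
  simp [hPdiag, Finset.sum_const, div_eq_mul_inv, mul_comm]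
end

section
/- (Theorem 3.) Let G = (V, E) be a finite simple graph with independence number α(G) < |V| and xi number Ξ(G), let d ≥ 1, let v : V → (Fin d → ℂ) be an orthonormal representation of G in ℂ^d, let ψ(k,l) = 1/√d if k = l and 0 otherwise, and set P(i,j) = |⟨v_i ⊗ v̄_j, ψ⟩|². Then for every real η ≥ 0, the detection-efficiency-scaled quantum value η² · [ Σ_{i ∈ V} P(i, i) − (1/(2·Ξ(G))) · Σ_{{i,j} ∈ E} (P(i, j) + P(j, i)) ] is strictly greater than α(G) if and only if η² > α(G)·d / |V|. -/
open scoped Classical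
open ComplexConjugate

/-- Theorem 3: with detection efficiency `η`, the scaled quantum value
of the graph Bell functional exceeds the LHV bound `α(G)` iff `η² > α(G)·d / |V|`. -/
theorem stmt_4 {V : Type*} [Fintype V] (G : SimpleGraph V)
    (hα : indepNum G < Fintype.card V)
    (d : ℕ) (hd : 1 ≤ d) (v : V → Fin d → ℂ)
    (hunit : ∀ i, ∑ k, conj (v i k) * v i k = 1)
    (horth : ∀ i j, G.Adj i j → ∑ k, conj (v i k) * v j k = 0)
    (ψ : Fin d × Fin d → ℂ)
    (hψ : ∀ p : Fin d × Fin d, ψ p = if p.1 = p.2 then ((1 / Real.sqrt d : ℝ) : ℂ) else 0)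
    (P : V → V → ℝ)
    (hP : ∀ i j, P i j =
      ‖∑ p : Fin d × Fin d, conj (v i p.1 * conj (v j p.2)) * ψ p‖ ^ 2)
    (η : ℝ) (hη : 0 ≤ η) :
    η ^ 2 *
      (∑ i, P i i -
        (1 / (2 * (xiNum G : ℝ))) *
          ∑ e ∈ G.edgeFinset, Sym2.lift ⟨fun i j => P i j + P j i, fun i j => by ring⟩ e)
      > indepNum G
    ↔ η ^ 2 > (indepNum G : ℝ) * d / (Fintype.card V : ℝ) := by

  -- Key computation of the inner product
  have key : ∀ i j, (∑ p : Fin d × Fin d, conj (v i p.1 * conj (v j p.2)) * ψ p)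
      = ((1 / Real.sqrt d : ℝ) : ℂ) * ∑ k, conj (v i k) * v j k := by
    intro i j
    rw [Fintype.sum_prod_type]
    simp only [hψ, mul_ite, mul_zero]
    rw [Finset.mul_sum]
    refine Finset.sum_congr rfl fun k _ => ?_
    rw [Finset.sum_ite_eq (Finset.univ) k
      (fun l => conj (v i k * conj (v j l)) * ((1 / Real.sqrt d : ℝ) : ℂ))]
    simp [map_mul, mul_comm]
  have hd0 : (0:ℝ) < d := by exact_mod_cast hd
  have hsq : (0:ℝ) < Real.sqrt d := Real.sqrt_pos.mpr hd0
  -- Diagonal terms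
  have hPii : ∀ i, P i i = 1 / (d : ℝ) := by
    intro i
    rw [hP, key, hunit]
    rw [mul_one, Complex.norm_real, Real.norm_eq_abs, abs_of_pos (by positivity), div_pow, one_pow,
      Real.sq_sqrt hd0.le]
  -- Edge terms vanish
  have hPadj : ∀ i j, G.Adj i j → P i j = 0 := by
    intro i j h
    rw [hP, key, horth i j h, mul_zero, norm_zero]
    norm_num
  have hedge : ∑ e ∈ G.edgeFinset,
      Sym2.lift ⟨fun i j => P i j + P j i, fun i j => by ring⟩ e = 0 := by
    refine Finset.sum_eq_zero fun e he => ?_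
    rw [SimpleGraph.mem_edgeFinset] at he
    induction e using Sym2.ind with
    | _ i j =>
      rw [SimpleGraph.mem_edgeSet] at he
      simp [Sym2.lift, hPadj i j he, hPadj j i he.symm]
  have hsum : ∑ i, P i i = (Fintype.card V : ℝ) / d := by
    rw [Finset.sum_congr rfl fun i _ => hPii i]
    simp [Finset.card_univ, div_eq_mul_inv]
  rw [hedge, hsum, mul_zero, sub_zero]
  have hN : (0:ℝ) < Fintype.card V := by
    have : 0 < Fintype.card V := lt_of_le_of_lt (Nat.zero_le _) hα
    exact_mod_cast this
  rw [gt_iff_lt, gt_iff_lt, div_lt_iff₀ hN, show η ^ 2 * ((Fintype.card V : ℝ) / d)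
    = η ^ 2 * (Fintype.card V : ℝ) / d by ring, lt_div_iff₀ hd0]
end

section
/- (Theorem 3b, critical visibility.) Let G = (V, E) be a finite simple graph with independence number α(G) < |V| and xi number Ξ(G), let d ≥ 1, let v : V → (Fin d → ℂ) be an orthonormal representation of G in ℂ^d, let ψ(k,l) = 1/√d if k = l and 0 otherwise, and set P(i,j) = |⟨v_i ⊗ v̄_j, ψ⟩|². For W ∈ [0, 1], define P_W(i, j) = W·P(i, j) + (1 − W)/d², and let I(W) = Σ_{i ∈ V} P_W(i, i) − (1/(2·Ξ(G))) · Σ_{{i,j} ∈ E} (P_W(i, j) + P_W(j, i)). Let Q_mix = (|V| − |E|/Ξ(G))/d². Then I(W) = W·(|V|/d) + (1 − W)·Q_mix, and if |V|/d > Q_mix, then I(W) > α(G) if and only if W > (α(G) − Q_mix)/((|V|/d) − Q_mix). -/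
open scoped Classical
open ComplexConjugate

/-- Theorem 3b, critical visibility: for the Werner-type noisy
probabilities `P_W(i,j) = W·P(i,j) + (1−W)/d²`, the Bell value satisfies
`I(W) = W·(|V|/d) + (1−W)·Q_mix`, and, whenever `|V|/d > Q_mix`,
`I(W) > α(G) ↔ W > (α(G) − Q_mix)/((|V|/d) − Q_mix)`. -/
theorem stmt_5 {V : Type*} [Fintype V] (G : SimpleGraph V)
    (hα : indepNum G < Fintype.card V)
    (d : ℕ) (hd : 1 ≤ d) (v : V → Fin d → ℂ)
    (hunit : ∀ i, ∑ k, conj (v i k) * v i k = 1)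
    (horth : ∀ i j, G.Adj i j → ∑ k, conj (v i k) * v j k = 0)
    (ψ : Fin d × Fin d → ℂ)
    (hψ : ∀ p : Fin d × Fin d, ψ p = if p.1 = p.2 then ((1 / Real.sqrt d : ℝ) : ℂ) else 0)
    (P : V → V → ℝ)
    (hP : ∀ i j, P i j =
      ‖∑ p : Fin d × Fin d, conj (v i p.1 * conj (v j p.2)) * ψ p‖ ^ 2)
    (W : ℝ) (hW0 : 0 ≤ W) (hW1 : W ≤ 1)
    (PW : V → V → ℝ)
    (hPW : ∀ i j, PW i j = W * P i j + (1 - W) / (d : ℝ) ^ 2)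
    (I : ℝ)
    (hI : I = ∑ i, PW i i -
      (1 / (2 * (xiNum G : ℝ))) *
        ∑ e ∈ G.edgeFinset, Sym2.lift ⟨fun i j => PW i j + PW j i, fun i j => by ring⟩ e)
    (Qmix : ℝ)
    (hQmix : Qmix = ((Fintype.card V : ℝ) - (G.edgeFinset.card : ℝ) / (xiNum G : ℝ)) / (d : ℝ) ^ 2) :
    I = W * ((Fintype.card V : ℝ) / d) + (1 - W) * Qmix ∧
      ((Fintype.card V : ℝ) / d > Qmix →
        (I > indepNum G ↔ W > ((indepNum G : ℝ) - Qmix) / ((Fintype.card V : ℝ) / d - Qmix))) := by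
  have hd0 : (0:ℝ) < d := by exact_mod_cast hd
  have hsum : ∀ i j : V, (∑ p : Fin d × Fin d, conj (v i p.1 * conj (v j p.2)) * ψ p)
      = (∑ k, conj (v i k) * v j k) * ((1 / Real.sqrt d : ℝ) : ℂ) := by
    intro i j
    rw [Fintype.sum_prod_type, Finset.sum_mul]
    refine Finset.sum_congr rfl fun k _ => ?_
    rw [Finset.sum_eq_single k]
    · rw [hψ]; simp [map_mul]
    · intro l _ hlk; rw [hψ]; simp [hlk.symm]
    · simp
  have hPii : ∀ i, P i i = 1 / d := by
    intro i
    rw [hP, hsum, hunit, one_mul, Complex.norm_real, Real.norm_eq_abs,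
      abs_of_nonneg (by positivity), div_pow, one_pow, Real.sq_sqrt hd0.le]
  have hPadj : ∀ i j, G.Adj i j → P i j = 0 := by
    intro i j h
    rw [hP, hsum, horth i j h, zero_mul, norm_zero]
    norm_num
  have hS1 : ∑ i, PW i i = (Fintype.card V : ℝ) * (W / d + (1 - W) / d ^ 2) := by
    have : ∀ i : V, PW i i = W / d + (1 - W) / d ^ 2 := by
      intro i; rw [hPW, hPii]; ring
    simp only [this]
    rw [Finset.sum_const, nsmul_eq_mul, Finset.card_univ]
  have hE : ∑ e ∈ G.edgeFinset, Sym2.lift ⟨fun i j => PW i j + PW j i, fun i j => by ring⟩ e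
      = (G.edgeFinset.card : ℝ) * (2 * (1 - W) / d ^ 2) := by
    rw [Finset.sum_congr rfl fun e he => ?_, Finset.sum_const, nsmul_eq_mul]
    induction e using Sym2.ind with
    | _ i j =>
      have hadj : G.Adj i j := by
        rw [SimpleGraph.mem_edgeFinset, SimpleGraph.mem_edgeSet] at he; exact he
      rw [Sym2.lift_mk]
      show PW i j + PW j i = _
      rw [hPW, hPW, hPadj i j hadj, hPadj j i hadj.symm]; ring
  have hIval : I = W * ((Fintype.card V : ℝ) / d) + (1 - W) * Qmix := by
    rw [hI, hS1, hE, hQmix]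
    rcases eq_or_ne (xiNum G : ℝ) 0 with h0 | h0
    · rw [h0]; simp; ring
    · field_simp
      ring
  refine ⟨hIval, fun hgt => ?_⟩
  have hD : (0:ℝ) < (Fintype.card V : ℝ) / d - Qmix := sub_pos.mpr hgt
  rw [hIval]
  constructor
  · intro h; rw [gt_iff_lt, div_lt_iff₀ hD]; nlinarith
  · intro h; rw [gt_iff_lt, div_lt_iff₀ hD] at h; nlinarith
end

section
/- (Theorem 4, critical detection efficiency with noise.) Let G = (V, E) be a finite simple graph with independence number α(G) < |V| and xi number Ξ(G), let d ≥ 1, let v : V → (Fin d → ℂ) be an orthonormal representation of G in ℂ^d, let ψ(k,l) = 1/√d if k = l and 0 otherwise, and set P(i,j) = |⟨v_i ⊗ v̄_j, ψ⟩|². For W ∈ [0, 1], define P_W(i, j) = W·P(i, j) + (1 − W)/d² and I(W) = Σ_{i ∈ V} P_W(i, i) − (1/(2·Ξ(G))) · Σ_{{i,j} ∈ E} (P_W(i, j) + P_W(j, i)). Set D = |V|·(W·(d − 1) + 1) − |E|·(1 − W)/Ξ(G) and suppose D > 0. Then for every real η ≥ 0, η² · I(W) > α(G) if and only if η² > α(G)·d²/D.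 -/
open scoped Classical
open ComplexConjugate

/-- Theorem 4, critical detection efficiency with noise: with
visibility `W` and detection efficiency `η`, setting
`D = |V|·(W·(d − 1) + 1) − |E|·(1 − W)/Ξ(G) > 0`, one has
`η² · I(W) > α(G) ↔ η² > α(G)·d²/D`. -/
theorem stmt_6 {V : Type*} [Fintype V] (G : SimpleGraph V)
    (hα : indepNum G < Fintype.card V)
    (d : ℕ) (hd : 1 ≤ d) (v : V → Fin d → ℂ)
    (hunit : ∀ i, ∑ k, conj (v i k) * v i k = 1)
    (horth : ∀ i j, G.Adj i j → ∑ k, conj (v i k) * v j k = 0)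
    (ψ : Fin d × Fin d → ℂ)
    (hψ : ∀ p : Fin d × Fin d, ψ p = if p.1 = p.2 then ((1 / Real.sqrt d : ℝ) : ℂ) else 0)
    (P : V → V → ℝ)
    (hP : ∀ i j, P i j =
      ‖∑ p : Fin d × Fin d, conj (v i p.1 * conj (v j p.2)) * ψ p‖ ^ 2)
    (W : ℝ) (hW0 : 0 ≤ W) (hW1 : W ≤ 1)
    (PW : V → V → ℝ)
    (hPW : ∀ i j, PW i j = W * P i j + (1 - W) / (d : ℝ) ^ 2)
    (I : ℝ)
    (hI : I = ∑ i, PW i i -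
      (1 / (2 * (xiNum G : ℝ))) *
        ∑ e ∈ G.edgeFinset, Sym2.lift ⟨fun i j => PW i j + PW j i, fun i j => by ring⟩ e)
    (D : ℝ)
    (hD : D = (Fintype.card V : ℝ) * (W * ((d : ℝ) - 1) + 1)
      - (G.edgeFinset.card : ℝ) * (1 - W) / (xiNum G : ℝ))
    (hDpos : 0 < D)
    (η : ℝ) (hη : 0 ≤ η) :
    η ^ 2 * I > indepNum G ↔ η ^ 2 > (indepNum G : ℝ) * (d : ℝ) ^ 2 / D := by
  have hd0 : (0:ℝ) < (d:ℝ) := by exact_mod_cast hd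
  have hd2 : (0:ℝ) < (d:ℝ)^2 := by positivity
  -- inner sum
  have hsum : ∀ i j, (∑ p : Fin d × Fin d, conj (v i p.1 * conj (v j p.2)) * ψ p)
      = ((1 / Real.sqrt d : ℝ) : ℂ) * ∑ k, conj (v i k) * v j k := by
    intro i j
    rw [Fintype.sum_prod_type, Finset.mul_sum]
    refine Finset.sum_congr rfl fun k _ => ?_
    rw [Finset.sum_eq_single k]
    · simp [hψ]; ring
    · intro l _ hl
      simp [hψ, hl.symm]
    · simp
  have hPdiag : ∀ i, P i i = 1 / (d:ℝ) := by
    intro i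
    rw [hP, hsum, hunit, mul_one, Complex.norm_real, Real.norm_eq_abs]
    rw [abs_of_nonneg (by positivity), div_pow, one_pow, Real.sq_sqrt hd0.le]
  have hPadj : ∀ i j, G.Adj i j → P i j = 0 := by
    intro i j h
    rw [hP, hsum, horth i j h, mul_zero]
    simp
  have hdiagsum : ∑ i, PW i i = (Fintype.card V : ℝ) * (W / d + (1 - W) / (d:ℝ)^2) := by
    have hPWd : ∀ i, PW i i = W * (1/(d:ℝ)) + (1-W)/(d:ℝ)^2 := fun i => by rw [hPW, hPdiag]
    simp only [hPWd]
    rw [Finset.sum_const, nsmul_eq_mul, Finset.card_univ]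
    ring
  have hedge : ∀ e ∈ G.edgeFinset,
      Sym2.lift ⟨fun i j => PW i j + PW j i, fun i j => by ring⟩ e = 2 * (1 - W) / (d:ℝ)^2 := by
    intro e he
    induction e using Sym2.ind with
    | _ i j =>
      rw [SimpleGraph.mem_edgeFinset, SimpleGraph.mem_edgeSet] at he
      simp only [Sym2.lift_mk]
      rw [hPW, hPW, hPadj i j he, hPadj j i he.symm]
      ring
  have hesum : (∑ e ∈ G.edgeFinset, Sym2.lift ⟨fun i j => PW i j + PW j i, fun i j => by ring⟩ e)
      = (G.edgeFinset.card : ℝ) * (2 * (1 - W) / (d:ℝ)^2) := by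
    rw [Finset.sum_congr rfl hedge, Finset.sum_const, nsmul_eq_mul]
  have hID : I = D / (d:ℝ)^2 := by
    rw [hI, hD, hdiagsum, hesum]
    rcases eq_or_ne ((xiNum G : ℝ)) 0 with hx | hx
    · rw [hx]
      field_simp
      ring
    · field_simp
      ring
  rw [hID, gt_iff_lt, gt_iff_lt, div_lt_iff₀ hDpos, ← mul_div_assoc, lt_div_iff₀ hd2]
end

section
/- (Resolution of the identity by Newman states.) Let n be a positive multiple of 4 and let N_n = {v ∈ {−1, 1}^n : v_1 = 1 and the number of indices i with v_i = −1 is even} (a set of representatives of the Newman states). Then |N_n| = 2^{n−2} and Σ_{v ∈ N_n} (1/n)·v·vᵀ = (2^{n−2}/n)·I_n, i.e., the rank-one projectors onto the normalized Newman states sum to (2^{n−2}/n) times the n×n identity matrix. -/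
open scoped Classical

/-- The ±1-vector in `ℝ^n` encoded by a Boolean pattern: entry `1` where `true`,
entry `-1` where `false`.  This identifies `Fin n → Bool` with `{−1,1}^n`. -/
def sgn {n : ℕ} (ε : Fin n → Bool) : Fin n → ℝ := fun i => if ε i then 1 else -1


namespace Stmt9Aux

variable {n : ℕ}

lemma sgn_true_iff (ε : Fin n → Bool) (i : Fin n) : sgn ε i = (1:ℝ) ↔ ε i = true := by
  unfold sgn; cases h : ε i <;> norm_num

lemma sgn_neg_iff (ε : Fin n → Bool) (i : Fin n) : sgn ε i = (-1:ℝ) ↔ ε i = false := by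
  unfold sgn; cases h : ε i <;> norm_num

def cnt (ε : Fin n → Bool) : ℕ := (Finset.univ.filter fun i => ε i = false).card

/-- flipping one coordinate flips the parity of the number of `false` entries -/
lemma cnt_update (ε : Fin n → Bool) (j : Fin n) :
    Even (cnt (Function.update ε j (!ε j))) ↔ ¬ Even (cnt ε) := by
  unfold cnt
  by_cases h : ε j = true
  ·
      have hset : (Finset.univ.filter fun i => Function.update ε j (!ε j) i = false)
          = insert j (Finset.univ.filter fun i => ε i = false) := by
        ext i
        by_cases hij : i = j
        · subst hij; simp [Function.update, h]
        · simp [Function.update, hij]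
      have hj : j ∉ (Finset.univ.filter fun i => ε i = false) := by simp [h]
      rw [hset, Finset.card_insert_of_notMem hj, Nat.even_add_one]
  ·
      have h : ε j = false := by simpa using h
      have hset : (Finset.univ.filter fun i => Function.update ε j (!ε j) i = false)
          = (Finset.univ.filter fun i => ε i = false).erase j := by
        ext i
        by_cases hij : i = j
        · subst hij; simp [Function.update, h]
        · simp [Function.update, hij]
      have hj : j ∈ (Finset.univ.filter fun i => ε i = false) := by simp [h]
      rw [hset, Finset.card_erase_of_mem hj]
      have hc : 1 ≤ (Finset.univ.filter fun i => ε i = false).card :=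
        Finset.card_pos.mpr ⟨j, hj⟩
      rw [Nat.even_sub hc]
      simp

lemma sgn_update_self (ε : Fin n → Bool) (j : Fin n) :
    sgn (Function.update ε j (!ε j)) j = - sgn ε j := by
  unfold sgn; cases h : ε j <;> simp [Function.update, h]

lemma sgn_update_ne (ε : Fin n → Bool) (j i : Fin n) (hij : i ≠ j) :
    sgn (Function.update ε j (!ε j)) i = sgn ε i := by
  unfold sgn; simp [Function.update, hij]

lemma update_update (ε : Fin n → Bool) (j : Fin n) :
    Function.update (Function.update ε j (!ε j)) j (!(Function.update ε j (!ε j) j)) = ε := by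
  funext x
  by_cases hx : x = j
  · subst hx; simp [Function.update]
  · simp [Function.update, hx]

/-- flipping coordinate `j` is a card-bijection between a filter and the filter with
parity condition about coordinate `j` negated -/
lemma card_flip (p q : (Fin n → Bool) → Prop) [DecidablePred p] [DecidablePred q] (j : Fin n)
    (hpq : ∀ ε, p ε ↔ q (Function.update ε j (!ε j)))
    (hqp : ∀ ε, q ε ↔ p (Function.update ε j (!ε j))) :
    (Finset.univ.filter p).card = (Finset.univ.filter q).card := by
  refine Finset.card_nbij' (fun ε => Function.update ε j (!ε j))
    (fun ε => Function.update ε j (!ε j)) ?_ ?_ ?_ ?_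
  · intro ε hε
    simp only [Finset.mem_coe, Finset.mem_filter, Finset.mem_univ, true_and] at hε ⊢
    exact (hpq ε).mp hε
  · intro ε hε
    simp only [Finset.mem_coe, Finset.mem_filter, Finset.mem_univ, true_and] at hε ⊢
    exact (hqp ε).mp hε
  · intro ε _; exact update_update ε j
  · intro ε _; exact update_update ε j

lemma pow_pred (m : ℕ) (hm : 1 ≤ m) : 2 ^ m = 2 * 2 ^ (m - 1) := by
  calc 2 ^ m = 2 ^ (m - 1 + 1) := by rw [Nat.sub_add_cancel hm]
    _ = 2 ^ (m - 1) * 2 := pow_succ 2 (m - 1)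
    _ = 2 * 2 ^ (m - 1) := Nat.mul_comm _ _

lemma card_first (hn1 : 1 ≤ n) (i0 : Fin n) :
    (Finset.univ.filter fun ε : Fin n → Bool => ε i0 = true).card = 2 ^ (n - 1) := by
  have key := Finset.card_filter_add_card_filter_not
    (s := (Finset.univ : Finset (Fin n → Bool))) (p := fun ε => ε i0 = true)
  have huniv : (Finset.univ : Finset (Fin n → Bool)).card = 2 ^ n := by
    simp [Fintype.card_fun]
  have hflip : (Finset.univ.filter fun ε : Fin n → Bool => ε i0 = true).card
      = (Finset.univ.filter fun ε : Fin n → Bool => ¬ (ε i0 = true)).card := by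
    apply card_flip _ _ i0
    · intro ε
      cases h : ε i0 <;> simp [Function.update, h]
    · intro ε
      cases h : ε i0 <;> simp [Function.update, h]
  rw [huniv, ← hflip, ← two_mul, pow_pred n hn1] at key
  exact Nat.eq_of_mul_eq_mul_left (by norm_num) key

lemma card_newman (hn4 : 4 ≤ n) (i0 i1 : Fin n) (h01 : i0 ≠ i1) :
    (Finset.univ.filter fun ε : Fin n → Bool => ε i0 = true ∧ Even (cnt ε)).card
      = 2 ^ (n - 2) := by
  have hp : 2 ^ (n - 1) = 2 * 2 ^ (n - 2) := by
    have h1 : 1 ≤ n - 1 := by omega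
    have h2 : n - 1 - 1 = n - 2 := by omega
    rw [pow_pred (n - 1) h1, h2]
  have hc1 : (Finset.univ.filter fun ε : Fin n → Bool => ε i0 = true).card = 2 ^ (n - 1) :=
    card_first (le_trans (by norm_num) hn4) i0
  have hflip : (Finset.univ.filter fun ε : Fin n → Bool => ε i0 = true ∧ Even (cnt ε)).card
      = (Finset.univ.filter fun ε : Fin n → Bool => ε i0 = true ∧ ¬ Even (cnt ε)).card := by
    apply card_flip _ _ i1
    · intro ε
      simp only [Function.update_of_ne h01, cnt_update, not_not]
    · intro ε
      simp only [Function.update_of_ne h01, cnt_update, not_not]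
  have key := Finset.card_filter_add_card_filter_not
    (s := (Finset.univ.filter fun ε : Fin n → Bool => ε i0 = true))
    (p := fun ε => Even (cnt ε))
  rw [Finset.filter_filter, Finset.filter_filter, hc1, ← hflip, ← two_mul, hp] at key
  exact Nat.eq_of_mul_eq_mul_left (by norm_num) key

def flip2 (a k : Fin n) (ε : Fin n → Bool) : Fin n → Bool :=
  Function.update (Function.update ε a (!ε a)) k (!(Function.update ε a (!ε a) k))

lemma flip2_apply_ne (a k : Fin n) (ε : Fin n → Bool) (x : Fin n)
    (hxa : x ≠ a) (hxk : x ≠ k) : flip2 a k ε x = ε x := by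
  simp [flip2, Function.update, hxa, hxk]

lemma flip2_apply_a (a k : Fin n) (hak : a ≠ k) (ε : Fin n → Bool) :
    flip2 a k ε a = !ε a := by
  simp [flip2, Function.update, hak]

lemma flip2_apply_k (a k : Fin n) (hak : a ≠ k) (ε : Fin n → Bool) :
    flip2 a k ε k = !ε k := by
  simp [flip2, Function.update, (Ne.symm hak : k ≠ a)]

lemma flip2_flip2 (a k : Fin n) (hak : a ≠ k) (ε : Fin n → Bool) :
    flip2 a k (flip2 a k ε) = ε := by
  funext x
  by_cases hxk : x = k
  · subst hxk
    rw [flip2_apply_k a x hak, flip2_apply_k a x hak, Bool.not_not]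
  · by_cases hxa : x = a
    · subst hxa
      rw [flip2_apply_a x k hak, flip2_apply_a x k hak, Bool.not_not]
    · rw [flip2_apply_ne a k _ x hxa hxk, flip2_apply_ne a k _ x hxa hxk]

lemma even_cnt_flip2 (a k : Fin n) (ε : Fin n → Bool) :
    Even (cnt (flip2 a k ε)) ↔ Even (cnt ε) := by
  unfold flip2
  rw [cnt_update, cnt_update, not_not]

lemma sgn_flip2_a (a k : Fin n) (hak : a ≠ k) (ε : Fin n → Bool) :
    sgn (flip2 a k ε) a = - sgn ε a := by
  rw [show sgn (flip2 a k ε) a = (if flip2 a k ε a then (1:ℝ) else -1) from rfl,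
    flip2_apply_a a k hak]
  cases h : ε a <;> simp [sgn, h]

lemma sgn_flip2_ne (a k : Fin n) (ε : Fin n → Bool) (x : Fin n)
    (hxa : x ≠ a) (hxk : x ≠ k) : sgn (flip2 a k ε) x = sgn ε x := by
  rw [show sgn (flip2 a k ε) x = (if flip2 a k ε x then (1:ℝ) else -1) from rfl,
    flip2_apply_ne a k ε x hxa hxk]
  rfl

lemma sum_zero (hn4 : 4 ≤ n) (i0 i j : Fin n) (hij : i ≠ j) :
    ∑ ε ∈ (Finset.univ.filter fun ε : Fin n → Bool => ε i0 = true ∧ Even (cnt ε)),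
      sgn ε i * sgn ε j = 0 := by
  -- pick a coordinate to flip among {i, j} distinct from i0
  set a : Fin n := if i = i0 then j else i with ha
  -- pick an auxiliary coordinate k avoiding i0, i, j
  have hcard : ({i0, i, j} : Finset (Fin n)).card < n := by
    calc ({i0, i, j} : Finset (Fin n)).card
        ≤ ({i, j} : Finset (Fin n)).card + 1 := Finset.card_insert_le _ _
      _ ≤ (({j} : Finset (Fin n)).card + 1) + 1 := by
          exact Nat.add_le_add_right (Finset.card_insert_le _ _) 1
      _ = 3 := by rw [Finset.card_singleton]
      _ < n := by omega
  obtain ⟨k, hk⟩ : ∃ k : Fin n, k ∉ ({i0, i, j} : Finset (Fin n)) := by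
    by_contra h
    push_neg at h
    have hle : (Finset.univ : Finset (Fin n)).card ≤ ({i0, i, j} : Finset (Fin n)).card :=
      Finset.card_le_card (fun x _ => h x)
    rw [Finset.card_univ, Fintype.card_fin] at hle
    omega
  have hki0 : k ≠ i0 := by intro h; exact hk (by simp [h])
  have hki : k ≠ i := by intro h; exact hk (by simp [h])
  have hkj : k ≠ j := by intro h; exact hk (by simp [h])
  have hai0 : a ≠ i0 := by
    by_cases h : i = i0
    · rw [ha, if_pos h]
      intro hc
      exact hij (h.trans hc.symm)
    · rw [ha, if_neg h]
      exact h
  have hak : a ≠ k := by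
    by_cases h : i = i0
    · rw [ha, if_pos h]; exact Ne.symm hkj
    · rw [ha, if_neg h]; exact Ne.symm hki
  apply Finset.sum_involution (g := fun ε _ => flip2 a k ε)
  · -- f ε + f (flip2 ε) = 0
    intro ε _
    by_cases h : i = i0
    · have hia : i ≠ a := by
        rw [ha, if_pos h]
        intro hc; exact hij hc
      have hja : j = a := by rw [ha, if_pos h]
      rw [sgn_flip2_ne a k ε i hia (Ne.symm hki), hja, sgn_flip2_a a k hak]
      ring
    · have hia : i = a := by rw [ha, if_neg h]
      have hja : j ≠ a := by
        rw [ha, if_neg h]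
        exact Ne.symm hij
      rw [sgn_flip2_ne a k ε j hja (Ne.symm hkj), hia, sgn_flip2_a a k hak]
      ring
  · -- nontrivial
    intro ε _ _
    intro hc
    have h1 : flip2 a k ε a = !ε a := flip2_apply_a a k hak ε
    rw [hc] at h1
    exact (Bool.eq_not_self (ε a)).mp h1
  · -- membership
    intro ε hε
    simp only [Finset.mem_filter, Finset.mem_univ, true_and] at hε ⊢
    refine ⟨?_, ?_⟩
    · rw [flip2_apply_ne a k ε i0 (Ne.symm hai0) (Ne.symm hki0)]
      exact hε.1
    · rw [even_cnt_flip2]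
      exact hε.2
  · -- involution
    intro ε _
    exact flip2_flip2 a k hak ε

end Stmt9Aux

open Stmt9Aux in
/-- resolution of the identity by Newman states: for `n` a positive
multiple of `4` and `N_n` the set of `±1`-vectors with first coordinate `1` and an
even number of entries equal to `−1`, one has `|N_n| = 2^{n−2}` and
`Σ_{v ∈ N_n} (1/n)·v·vᵀ = (2^{n−2}/n)·I_n`. -/
theorem stmt_9 (n : ℕ) (hn : 0 < n) (h4 : 4 ∣ n) :
    (Finset.univ.filter
        (fun ε : Fin n → Bool => sgn ε ⟨0, hn⟩ = (1 : ℝ) ∧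
          Even (Finset.univ.filter fun i => sgn ε i = (-1 : ℝ)).card)).card
      = 2 ^ (n - 2) ∧
    (∑ ε ∈ Finset.univ.filter
        (fun ε : Fin n → Bool => sgn ε ⟨0, hn⟩ = (1 : ℝ) ∧
          Even (Finset.univ.filter fun i => sgn ε i = (-1 : ℝ)).card),
      ((1 : ℝ) / n) • Matrix.vecMulVec (sgn ε) (sgn ε))
      = ((2 ^ (n - 2) : ℝ) / n) • (1 : Matrix (Fin n) (Fin n) ℝ) := by
  have hn4 : 4 ≤ n := Nat.le_of_dvd hn h4
  have h1n : 1 < n := by omega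
  set i0 : Fin n := ⟨0, hn⟩ with hi0
  set i1 : Fin n := ⟨1, h1n⟩ with hi1
  have h01 : i0 ≠ i1 := by
    intro h
    have := congrArg Fin.val h
    simp [hi0, hi1] at this
  have hfilter : (Finset.univ.filter
        (fun ε : Fin n → Bool => sgn ε i0 = (1 : ℝ) ∧
          Even (Finset.univ.filter fun i => sgn ε i = (-1 : ℝ)).card))
      = (Finset.univ.filter fun ε : Fin n → Bool => ε i0 = true ∧ Even (cnt ε)) := by
    apply Finset.filter_congr
    intro ε _
    have hset : (Finset.univ.filter fun i => sgn ε i = (-1:ℝ))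
        = (Finset.univ.filter fun i => ε i = false) := by
      apply Finset.filter_congr
      intro i _
      exact sgn_neg_iff ε i
    rw [sgn_true_iff, hset]
    exact Iff.rfl
  have hcard : (Finset.univ.filter fun ε : Fin n → Bool =>
      ε i0 = true ∧ Even (cnt ε)).card = 2 ^ (n - 2) :=
    card_newman hn4 i0 i1 h01
  constructor
  · rw [hfilter]
    exact hcard
  · rw [hfilter]
    ext i j
    simp only [Matrix.sum_apply, Matrix.smul_apply, Matrix.vecMulVec_apply, Matrix.one_apply,
      smul_eq_mul]
    by_cases hij : i = j
    · subst hij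
      rw [if_pos rfl]
      have h1 : ∀ ε : Fin n → Bool, sgn ε i * sgn ε i = 1 := by
        intro ε; cases h : ε i <;> simp [sgn, h]
      calc ∑ ε ∈ Finset.univ.filter fun ε : Fin n → Bool => ε i0 = true ∧ Even (cnt ε),
              1/(n:ℝ) * (sgn ε i * sgn ε i)
          = ∑ ε ∈ Finset.univ.filter fun ε : Fin n → Bool => ε i0 = true ∧ Even (cnt ε),
              1/(n:ℝ) := by
            apply Finset.sum_congr rfl
            intro ε _
            rw [h1 ε, mul_one]
        _ = ((Finset.univ.filter fun ε : Fin n → Bool =>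
              ε i0 = true ∧ Even (cnt ε)).card : ℝ) * (1/(n:ℝ)) := by
            rw [Finset.sum_const, nsmul_eq_mul]
        _ = ((2 ^ (n - 2) : ℕ) : ℝ) * (1/(n:ℝ)) := by rw [hcard]
        _ = (2 ^ (n - 2) : ℝ) / (n:ℝ) * 1 := by push_cast; ring
    · rw [if_neg hij, mul_zero, ← Finset.mul_sum, sum_zero hn4 i0 i j hij, mul_zero]
end
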